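/- Define F(x) = (Γ(1/2+x/2)/Γ(1/2-x/2))^2 · Γ(1-x)/Γ(1+x) and I(z) = (Γ(1-z/2)/Γ(1+z/2))^2 · Γ(1+z)/Γ(1-z). Then for all x ∈ [0, 2/38] and z ∈ [0, 1/38] with z ≤ x, one has F(x)·I(z) ≥ 1 - 4(ln 2)·x. -/

import Mathlib

noncomputable def F (v : ℝ) : ℝ :=
  (Real.Gamma (1 / 2 + v / 2) / Real.Gamma (1 / 2 - v / 2)) ^ 2 *
    (Real.Gamma (1 - v) / Real.Gamma (1 + v))

noncomputable def I (v : ℝ) : ℝ :=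
  (Real.Gamma (1 - v / 2) / Real.Gamma (1 + v / 2)) ^ 2 *
    (Real.Gamma (1 + v) / Real.Gamma (1 - v))

set_option maxHeartbeats 1000000

open Finset Filter Real Topology

/-- Weierstrass product inequality. -/
lemma weier (d : ℕ → ℝ) (h0 : ∀ j, 0 ≤ d j) (h1 : ∀ j, d j ≤ 1) :
    ∀ m, 1 - ∑ j ∈ Finset.range m, d j ≤ ∏ j ∈ Finset.range m, (1 - d j) := by
  intro m
  induction m with
  | zero => simp
  | succ n ih =>
    rw [Finset.sum_range_succ, Finset.prod_range_succ]
    have hs : 0 ≤ ∑ j ∈ Finset.range n, d j := Finset.sum_nonneg fun j _ => h0 j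
    have hmul := mul_le_mul_of_nonneg_right ih (by linarith [h1 n] : (0:ℝ) ≤ 1 - d n)
    nlinarith [h0 n, h1 n]

/-- telescoping log sum -/
lemma tel (m : ℕ) : ∀ n : ℕ, m ≤ n →
    ∑ k ∈ Finset.Ico m n, (Real.log ((k:ℝ)+1) - Real.log (k:ℝ))
      = Real.log (n:ℝ) - Real.log (m:ℝ) := by
  intro n h
  induction n, h using Nat.le_induction with
  | base => simp
  | succ n hmn ih =>
    rw [Finset.sum_Ico_succ_top hmn, ih]
    push_cast
    ring

lemma Tle (m : ℕ) : ∑ k ∈ Finset.Ico m (2*m), (1:ℝ)/((k:ℝ)+1) ≤ Real.log 2 := by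
  rcases Nat.eq_zero_or_pos m with h | h
  · simp [h]
    exact (Real.log_pos (by norm_num)).le
  · have h1 : ∑ k ∈ Finset.Ico m (2*m), (1:ℝ)/((k:ℝ)+1)
        ≤ ∑ k ∈ Finset.Ico m (2*m), (Real.log ((k:ℝ)+1) - Real.log (k:ℝ)) := by
      apply Finset.sum_le_sum
      intro k hk
      have hk1 : (1:ℝ) ≤ (k:ℝ) := by
        have := (Finset.mem_Ico.mp hk).1
        exact_mod_cast le_trans h this
      have hpos : (0:ℝ) < (k:ℝ)/((k:ℝ)+1) := by positivity
      have hlog := Real.log_le_sub_one_of_pos hpos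
      rw [Real.log_div (by linarith) (by linarith)] at hlog
      have he : (k:ℝ)/((k:ℝ)+1) - 1 = -(1/((k:ℝ)+1)) := by field_simp; ring
      linarith [he ▸ hlog]
    rw [tel m (2*m) (by omega)] at h1
    have h2 : Real.log ((2*m : ℕ):ℝ) = Real.log 2 + Real.log (m:ℝ) := by
      push_cast
      rw [Real.log_mul (by norm_num) (by positivity)]
    linarith

lemma pair (m : ℕ) : ∑ j ∈ Finset.range m, (1:ℝ)/(((j:ℝ)+1/2)*((j:ℝ)+1))
    = 4 * ∑ k ∈ Finset.Ico m (2*m), (1:ℝ)/((k:ℝ)+1) := by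
  induction m with
  | zero => simp
  | succ n ih =>
    have e1 : ∑ k ∈ Finset.Ico n (2*(n+1)), (1:ℝ)/((k:ℝ)+1)
        = (1:ℝ)/((n:ℝ)+1) + ∑ k ∈ Finset.Ico (n+1) (2*(n+1)), (1:ℝ)/((k:ℝ)+1) :=
      Finset.sum_eq_sum_Ico_succ_bot (by omega) _
    have e2 : ∑ k ∈ Finset.Ico n (2*(n+1)), (1:ℝ)/((k:ℝ)+1)
        = ∑ k ∈ Finset.Ico n (2*n), (1:ℝ)/((k:ℝ)+1)
          + 1/(((2*n:ℕ):ℝ)+1) + 1/(((2*n+1:ℕ):ℝ)+1) := by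
      rw [show 2*(n+1) = (2*n+1)+1 by ring, Finset.sum_Ico_succ_top (by omega),
        Finset.sum_Ico_succ_top (by omega)]
    rw [Finset.sum_range_succ, ih]
    have e3 : ∑ k ∈ Finset.Ico (n+1) (2*(n+1)), (1:ℝ)/((k:ℝ)+1)
        = ∑ k ∈ Finset.Ico n (2*n), (1:ℝ)/((k:ℝ)+1)
          + (1/(2*(n:ℝ)+1) + 1/(2*(n:ℝ)+2) - 1/((n:ℝ)+1)) := by
      have h4 := e1
      rw [e2] at h4
      push_cast at h4
      rw [show 2*(n:ℝ)+1+1 = 2*(n:ℝ)+2 by ring] at h4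
      linarith
    rw [e3]
    have hn : (0:ℝ) ≤ (n:ℝ) := n.cast_nonneg
    field_simp
    ring

lemma prod_ge (u : ℝ) (hu0 : 0 ≤ u) (hu : u ≤ 1/38) (m : ℕ) :
    1 - 4*u*Real.log 2 ≤
      ∏ j ∈ Finset.range m, ((1/2 - u + (j:ℝ)) * (1 + u + (j:ℝ)))
        / ((1/2 + u + (j:ℝ)) * (1 - u + (j:ℝ))) := by
  set d : ℕ → ℝ := fun j => u/((1/2 + u + (j:ℝ)) * (1 - u + (j:ℝ))) with hd
  have hden : ∀ j : ℕ, (0:ℝ) < (1/2 + u + (j:ℝ)) * (1 - u + (j:ℝ)) := fun j => by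
    have : (0:ℝ) ≤ (j:ℝ) := j.cast_nonneg
    nlinarith
  have h0 : ∀ j, 0 ≤ d j := fun j => div_nonneg hu0 (hden j).le
  have h1 : ∀ j, d j ≤ 1 := fun j => by
    rw [hd, div_le_one (hden j)]
    have : (0:ℝ) ≤ (j:ℝ) := j.cast_nonneg
    nlinarith
  have hfac : ∀ j ∈ Finset.range m,
      ((1/2 - u + (j:ℝ)) * (1 + u + (j:ℝ))) / ((1/2 + u + (j:ℝ)) * (1 - u + (j:ℝ)))
        = 1 - d j := by
    intro j _
    have hD := (hden j).ne'
    have hthis : (1:ℝ) - u/((1/2 + u + (j:ℝ)) * (1 - u + (j:ℝ)))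
        = ((1/2 + u + (j:ℝ)) * (1 - u + (j:ℝ)) - u) / ((1/2 + u + (j:ℝ)) * (1 - u + (j:ℝ))) := by
      rw [eq_div_iff hD, sub_mul, one_mul, div_mul_cancel₀ _ hD]
    rw [hd, hthis]
    congr 1
    ring
  rw [Finset.prod_congr rfl hfac]
  have hW := weier d h0 h1 m
  have hsum : ∑ j ∈ Finset.range m, d j ≤ 4*u*Real.log 2 := by
    have hterm : ∀ j ∈ Finset.range m, d j ≤ u * (1/(((j:ℝ)+1/2)*((j:ℝ)+1))) := by
      intro j _
      have hj : (0:ℝ) ≤ (j:ℝ) := j.cast_nonneg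
      have hsmall : (0:ℝ) < ((j:ℝ)+1/2)*((j:ℝ)+1) := by nlinarith
      have hle : ((j:ℝ)+1/2)*((j:ℝ)+1) ≤ (1/2 + u + (j:ℝ)) * (1 - u + (j:ℝ)) := by nlinarith
      rw [hd, mul_one_div]
      exact div_le_div_of_nonneg_left hu0 hsmall hle
    calc ∑ j ∈ Finset.range m, d j
        ≤ ∑ j ∈ Finset.range m, u * (1/(((j:ℝ)+1/2)*((j:ℝ)+1))) := Finset.sum_le_sum hterm
      _ = u * ∑ j ∈ Finset.range m, (1:ℝ)/(((j:ℝ)+1/2)*((j:ℝ)+1)) := by rw [Finset.mul_sum]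
      _ = u * (4 * ∑ k ∈ Finset.Ico m (2*m), (1:ℝ)/((k:ℝ)+1)) := by rw [pair]
      _ ≤ u * (4 * Real.log 2) := by
          have := Tle m
          nlinarith
      _ = 4*u*Real.log 2 := by ring
  linarith

lemma ratio_alg (p1 p2 p3 p4 f A1 A2 A3 A4 : ℝ) (h : p1*p2 = p3*p4)
    (hp3 : p3 ≠ 0) (hp4 : p4 ≠ 0) (hf : f ≠ 0)
    (h1 : A1 ≠ 0) (h2 : A2 ≠ 0) (h3 : A3 ≠ 0) (h4 : A4 ≠ 0) :
    (p1*f/A1 * (p2*f/A2)) / (p3*f/A3 * (p4*f/A4)) = (A3*A4)/(A1*A2) := by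
  field_simp
  linear_combination h

noncomputable def G (t : ℝ) : ℝ :=
  Real.Gamma (1/2 + t/2) * Real.Gamma (1 - t/2)
    / (Real.Gamma (1/2 - t/2) * Real.Gamma (1 + t/2))

lemma G_ge {t : ℝ} (h0 : 0 ≤ t) (h1 : t ≤ 1/19) : 1 - 2*Real.log 2*t ≤ G t := by
  have hu0 : 0 ≤ t/2 := by linarith
  have hu : t/2 ≤ 1/38 := by linarith
  set u := t/2 with hudef
  have ha3 : (0:ℝ) < 1/2 - u := by linarith
  have ha4 : (0:ℝ) < 1 + u := by linarith
  set P : ℕ → ℝ := fun n => ∏ j ∈ Finset.range (n+1),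
      ((1/2 - u + (j:ℝ)) * (1 + u + (j:ℝ))) / ((1/2 + u + (j:ℝ)) * (1 - u + (j:ℝ))) with hP
  have hPge : ∀ n, 1 - 4*u*Real.log 2 ≤ P n := fun n => prod_ge u hu0 hu (n+1)
  have hne : Real.Gamma (1/2 - u) * Real.Gamma (1 + u) ≠ 0 :=
    (mul_pos (Real.Gamma_pos_of_pos ha3) (Real.Gamma_pos_of_pos ha4)).ne'
  have htend0 : Tendsto (fun n => (Real.GammaSeq (1/2+u) n * Real.GammaSeq (1-u) n)
      / (Real.GammaSeq (1/2-u) n * Real.GammaSeq (1+u) n)) atTop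
      (𝓝 (Real.Gamma (1/2+u) * Real.Gamma (1-u) / (Real.Gamma (1/2-u) * Real.Gamma (1+u)))) :=
    ((Real.GammaSeq_tendsto_Gamma (1/2+u)).mul (Real.GammaSeq_tendsto_Gamma (1-u))).div
      ((Real.GammaSeq_tendsto_Gamma (1/2-u)).mul (Real.GammaSeq_tendsto_Gamma (1+u))) hne
  have hkey : ∀ n : ℕ, 1 ≤ n →
      (Real.GammaSeq (1/2+u) n * Real.GammaSeq (1-u) n)
        / (Real.GammaSeq (1/2-u) n * Real.GammaSeq (1+u) n) = P n := by
    intro n hn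
    have hN : (0:ℝ) < (n:ℝ) := by exact_mod_cast hn
    have hfa : (0:ℝ) < (n.factorial : ℝ) := by exact_mod_cast n.factorial_pos
    have hr : (n:ℝ)^(1/2+u) * (n:ℝ)^(1-u) = (n:ℝ)^(1/2-u) * (n:ℝ)^(1+u) := by
      rw [← Real.rpow_add hN, ← Real.rpow_add hN]
      ring_nf
    have hA1 : (0:ℝ) < ∏ j ∈ Finset.range (n+1), (1/2 + u + (j:ℝ)) :=
      Finset.prod_pos fun j _ => by have : (0:ℝ) ≤ (j:ℝ) := j.cast_nonneg; linarith
    have hA2 : (0:ℝ) < ∏ j ∈ Finset.range (n+1), (1 - u + (j:ℝ)) :=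
      Finset.prod_pos fun j _ => by have : (0:ℝ) ≤ (j:ℝ) := j.cast_nonneg; linarith
    have hA3 : (0:ℝ) < ∏ j ∈ Finset.range (n+1), (1/2 - u + (j:ℝ)) :=
      Finset.prod_pos fun j _ => by have : (0:ℝ) ≤ (j:ℝ) := j.cast_nonneg; linarith
    have hA4 : (0:ℝ) < ∏ j ∈ Finset.range (n+1), (1 + u + (j:ℝ)) :=
      Finset.prod_pos fun j _ => by have : (0:ℝ) ≤ (j:ℝ) := j.cast_nonneg; linarith
    simp only [hP, Real.GammaSeq]
    rw [Finset.prod_div_distrib, Finset.prod_mul_distrib, Finset.prod_mul_distrib]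
    exact ratio_alg _ _ _ _ _ _ _ _ _ hr (Real.rpow_pos_of_pos hN _).ne'
      (Real.rpow_pos_of_pos hN _).ne' hfa.ne' hA1.ne' hA2.ne' hA3.ne' hA4.ne'
  have htend : Tendsto P atTop (𝓝 (G t)) := by
    have heq : (fun n => (Real.GammaSeq (1/2+u) n * Real.GammaSeq (1-u) n)
        / (Real.GammaSeq (1/2-u) n * Real.GammaSeq (1+u) n)) =ᶠ[atTop] P := by
      filter_upwards [eventually_ge_atTop 1] with n hn
      exact hkey n hn
    have hGt : G t = Real.Gamma (1/2+u) * Real.Gamma (1-u)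
        / (Real.Gamma (1/2-u) * Real.Gamma (1+u)) := by
      simp only [G, ← hudef]
    rw [hGt]
    exact htend0.congr' heq
  have hfin := ge_of_tendsto htend (Filter.Eventually.of_forall hPge)
  have h4 : 4*u*Real.log 2 = 2*Real.log 2*t := by rw [hudef]; ring
  linarith

lemma Feq_alg (A B C D Gp Gm q s : ℝ) (e1 : A*D*q = Gp * s) (e2 : C*B = Gm * q * s)
    (hq : q ≠ 0) (hs : s ≠ 0) (hC : C ≠ 0) (hD : D ≠ 0) (hGp : Gp ≠ 0) :
    (A/C)^2 * (Gm/Gp) = (A*B/(C*D))/q^2 := by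
  field_simp
  linear_combination (A*Gm*q) * e1 - (A*Gp) * e2

lemma Ieq_alg (A B C D Gp Gm q s : ℝ) (e1 : A*D*q = Gp * s) (e2 : C*B = Gm * q * s)
    (hq : q ≠ 0) (hs : s ≠ 0) (hC : C ≠ 0) (hD : D ≠ 0) (hGm : Gm ≠ 0) :
    (B/D)^2 * (Gp/Gm) = q^2 * (A*B/(C*D)) := by
  field_simp
  linear_combination (B*Gp) * e2 - (B*Gm*q) * e1

/-- Legendre duplication, rearranged. -/
lemma dup (w : ℝ) :
    Real.Gamma (1/2 + w/2) * Real.Gamma (1 + w/2) * (2:ℝ)^(w:ℝ)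
      = Real.Gamma (1+w) * Real.sqrt π := by
  have h := Real.Gamma_mul_Gamma_add_half (1/2 + w/2)
  rw [show (1:ℝ)/2 + w/2 + 1/2 = 1 + w/2 by ring, show 1 - 2*((1:ℝ)/2 + w/2) = -w by ring,
      show 2*((1:ℝ)/2 + w/2) = 1 + w by ring] at h
  rw [h, Real.rpow_neg (by norm_num : (0:ℝ) ≤ 2)]
  have h2 : ((2:ℝ)^(w:ℝ)) ≠ 0 := (Real.rpow_pos_of_pos two_pos w).ne'
  field_simp

lemma Gamma_pos' {s : ℝ} (h : 0 < s) : 0 < Real.Gamma s := Real.Gamma_pos_of_pos h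

theorem F_mul_I_lower_bound {x z : ℝ} (hx : x ∈ Set.Icc (0 : ℝ) (2 / 38))
    (hz : z ∈ Set.Icc (0 : ℝ) (1 / 38)) (hzx : z ≤ x) :
    1 - 4 * Real.log 2 * x ≤ F x * I z := by
  obtain ⟨hx0, hx1⟩ := hx
  obtain ⟨hz0, hz1⟩ := hz
  have hs : (0:ℝ) < Real.sqrt π := Real.sqrt_pos.mpr Real.pi_pos
  have hqx : (0:ℝ) < (2:ℝ)^(x:ℝ) := Real.rpow_pos_of_pos two_pos x
  have hqz : (0:ℝ) < (2:ℝ)^(z:ℝ) := Real.rpow_pos_of_pos two_pos z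
  -- Gamma positivity
  have gAx : (0:ℝ) < Real.Gamma (1/2 + x/2) := Real.Gamma_pos_of_pos (by linarith)
  have gBx : (0:ℝ) < Real.Gamma (1 - x/2) := Real.Gamma_pos_of_pos (by linarith)
  have gCx : (0:ℝ) < Real.Gamma (1/2 - x/2) := Real.Gamma_pos_of_pos (by linarith)
  have gDx : (0:ℝ) < Real.Gamma (1 + x/2) := Real.Gamma_pos_of_pos (by linarith)
  have gPx : (0:ℝ) < Real.Gamma (1 + x) := Real.Gamma_pos_of_pos (by linarith)
  have gMx : (0:ℝ) < Real.Gamma (1 - x) := Real.Gamma_pos_of_pos (by linarith)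
  have gCz : (0:ℝ) < Real.Gamma (1/2 - z/2) := Real.Gamma_pos_of_pos (by linarith)
  have gDz : (0:ℝ) < Real.Gamma (1 + z/2) := Real.Gamma_pos_of_pos (by linarith)
  have gMz : (0:ℝ) < Real.Gamma (1 - z) := Real.Gamma_pos_of_pos (by linarith)
  -- duplication identities
  have e1x : Real.Gamma (1/2 + x/2) * Real.Gamma (1 + x/2) * (2:ℝ)^(x:ℝ)
      = Real.Gamma (1+x) * Real.sqrt π := dup x
  have e2x : Real.Gamma (1/2 - x/2) * Real.Gamma (1 - x/2)
      = Real.Gamma (1-x) * (2:ℝ)^(x:ℝ) * Real.sqrt π := by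
    have h := dup (-x)
    rw [show (1:ℝ)/2 + -x/2 = 1/2 - x/2 by ring, show (1:ℝ) + -x/2 = 1 - x/2 by ring,
        show (1:ℝ) + -x = 1 - x by ring,
        Real.rpow_neg (by norm_num : (0:ℝ) ≤ 2), ← div_eq_mul_inv,
        div_eq_iff hqx.ne'] at h
    linear_combination h
  have e1z : Real.Gamma (1/2 + z/2) * Real.Gamma (1 + z/2) * (2:ℝ)^(z:ℝ)
      = Real.Gamma (1+z) * Real.sqrt π := dup z
  have e2z : Real.Gamma (1/2 - z/2) * Real.Gamma (1 - z/2)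
      = Real.Gamma (1-z) * (2:ℝ)^(z:ℝ) * Real.sqrt π := by
    have h := dup (-z)
    rw [show (1:ℝ)/2 + -z/2 = 1/2 - z/2 by ring, show (1:ℝ) + -z/2 = 1 - z/2 by ring,
        show (1:ℝ) + -z = 1 - z by ring,
        Real.rpow_neg (by norm_num : (0:ℝ) ≤ 2), ← div_eq_mul_inv,
        div_eq_iff hqz.ne'] at h
    linear_combination h
  have hF : F x = G x / ((2:ℝ)^(x:ℝ))^2 := by
    unfold F G
    exact Feq_alg _ _ _ _ _ _ _ _ e1x e2x hqx.ne' hs.ne' gCx.ne' gDx.ne' gPx.ne'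
  have hI : I z = ((2:ℝ)^(z:ℝ))^2 * G z := by
    unfold I G
    exact Ieq_alg _ _ _ _ _ _ _ _ e1z e2z hqz.ne' hs.ne' gCz.ne' gDz.ne' gMz.ne'
  rw [hF, hI]
  have hqx2 : ((2:ℝ)^(x:ℝ))^2 = Real.exp (2*(Real.log 2*x)) := by
    rw [Real.rpow_def_of_pos two_pos, sq, ← Real.exp_add]
    congr 1
    ring
  have hqz2 : ((2:ℝ)^(z:ℝ))^2 = Real.exp (2*(Real.log 2*z)) := by
    rw [Real.rpow_def_of_pos two_pos, sq, ← Real.exp_add]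
    congr 1
    ring
  rw [hqx2, hqz2]
  have hrw : G x / Real.exp (2*(Real.log 2*x)) * (Real.exp (2*(Real.log 2*z)) * G z)
      = Real.exp (2*(Real.log 2*z) - 2*(Real.log 2*x)) * (G x * G z) := by
    rw [Real.exp_sub]
    ring
  rw [hrw]
  have hGx := G_ge hx0 (by linarith : x ≤ 1/19)
  have hGz := G_ge hz0 (by linarith : z ≤ 1/19)
  have hL1 : Real.log 2 < 0.6931471808 := Real.log_two_lt_d9
  have hL0 : (0:ℝ) < Real.log 2 := Real.log_pos (by norm_num)
  have hexp := Real.add_one_le_exp (2*(Real.log 2*z) - 2*(Real.log 2*x))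
  have hepos := Real.exp_pos (2*(Real.log 2*z) - 2*(Real.log 2*x))
  have hx2 : (0:ℝ) ≤ 1 - 2*Real.log 2*x := by nlinarith
  have hz2 : (0:ℝ) ≤ 1 - 2*Real.log 2*z := by nlinarith
  have hGxz : (1 - 2*Real.log 2*x)*(1 - 2*Real.log 2*z) ≤ G x * G z :=
    mul_le_mul hGx hGz hz2 (le_trans hx2 hGx)
  have hstep : ((2*(Real.log 2*z) - 2*(Real.log 2*x)) + 1)
        * ((1 - 2*Real.log 2*x)*(1 - 2*Real.log 2*z))
      ≤ Real.exp (2*(Real.log 2*z) - 2*(Real.log 2*x)) * (G x * G z) :=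
    mul_le_mul hexp hGxz (mul_nonneg hx2 hz2) hepos.le
  have hps : (0:ℝ) ≤ (2*Real.log 2*x - 2*Real.log 2*z) * (2*Real.log 2*x + 2*Real.log 2*z) :=
    mul_nonneg (by nlinarith) (by nlinarith)
  have h3 : (0:ℝ) ≤ (2*Real.log 2*x) * (2*Real.log 2*z) * (1 - 2*Real.log 2*x + 2*Real.log 2*z) :=
    mul_nonneg (mul_nonneg (by nlinarith) (by nlinarith)) (by nlinarith)
  nlinarith [hstep, hps, h3]
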